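/- Let C ⊂ ℝ^{n+d} be a convex body with K = proj_{ℝⁿ}(C) containing z₀ + k·B∞ⁿ for some z₀ ∈ ℝⁿ and k > 1/2. Set ε = 1/(2k). Then there exists w* ∈ C such that C' := (1-ε)C + εw* satisfies: (1) C' ⊆ C and vol_{n+d}(C') = (1-ε)^{n+d} vol_{n+d}(C); (2) the projection to ℝⁿ of the centroid of C' is an integer vector; (3) proj_{ℝⁿ}(C') contains a translate of (k - 1/2)·B∞ⁿ. -/

import Mathlib

open MeasureTheory Set Metric
open scoped ENNReal Pointwise

noncomputable def centroid {E : Type*} [NormedAddCommGroup E] [NormedSpace ℝ E]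
    [MeasureSpace E] (D : Set E) : E :=
  (volume D).toReal⁻¹ • ∫ y in D, y

theorem centroid_rounding (n d : ℕ) (C : Set ((Fin n → ℝ) × (Fin d → ℝ)))
    (hconv : Convex ℝ C) (hcomp : IsCompact C) (hint : (interior C).Nonempty)
    (z₀ : Fin n → ℝ) (k : ℝ) (hk : 1 / 2 < k)
    (hbox : closedBall z₀ k ⊆ Prod.fst '' C) :
    ∃ w ∈ C, ∃ C' : Set ((Fin n → ℝ) × (Fin d → ℝ)),
      C' = (fun y => (1 - 1 / (2 * k)) • y + (1 / (2 * k)) • w) '' C ∧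
      C' ⊆ C ∧
      volume C' = ENNReal.ofReal ((1 - 1 / (2 * k)) ^ (n + d)) * volume C ∧
      (∃ zstar : Fin n → ℤ, (centroid C').1 = fun i => (zstar i : ℝ)) ∧
      (∃ c : Fin n → ℝ, closedBall c (k - 1 / 2) ⊆ Prod.fst '' C') := by
  haveI haar : (volume : Measure ((Fin n → ℝ) × (Fin d → ℝ))).IsAddHaarMeasure := by
    rw [show (volume : Measure ((Fin n → ℝ) × (Fin d → ℝ)))
        = (volume : Measure (Fin n → ℝ)).prod volume from rfl]
    exact Measure.prod.instIsAddHaarMeasure volume volume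
  have hk0 : (0:ℝ) < k := lt_trans (by norm_num) hk
  set ε : ℝ := 1 / (2 * k) with hεdef
  have hε0 : 0 < ε := by positivity
  have hε1 : ε < 1 := by rw [hεdef, div_lt_one (by positivity)]; linarith
  have h1ε : 0 < 1 - ε := by linarith
  have hεk : ε * k = 1 / 2 := by rw [hεdef]; field_simp
  have hrank : Module.finrank ℝ ((Fin n → ℝ) × (Fin d → ℝ)) = n + d := by
    simp [Module.finrank_prod]
  have hC_meas : MeasurableSet C := hcomp.measurableSet
  have hVpos : 0 < volume C :=
    lt_of_lt_of_le (isOpen_interior.measure_pos volume hint) (measure_mono interior_subset)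
  have hVfin : volume C < ⊤ := hcomp.measure_lt_top
  set V : ℝ := (volume C).toReal with hVdef
  have hV : 0 < V := ENNReal.toReal_pos hVpos.ne' hVfin.ne
  set b : Fin n → ℝ := (centroid C).1 with hbdef
  set zs : Fin n → ℤ := fun i => round ((1 - ε) * b i + ε * z₀ i) with hzdef
  set w₁ : Fin n → ℝ := fun i => ((zs i : ℝ) - (1 - ε) * b i) / ε with hw1def
  have hw₁mem : w₁ ∈ closedBall z₀ k := by
    rw [mem_closedBall, dist_pi_le_iff hk0.le]
    intro i
    rw [Real.dist_eq]
    have h1 : w₁ i - z₀ i = ((zs i : ℝ) - ((1 - ε) * b i + ε * z₀ i)) / ε := by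
      simp only [hw1def]; field_simp; ring
    rw [h1, abs_div, abs_of_pos hε0, div_le_iff₀ hε0]
    have h2 : |(zs i : ℝ) - ((1 - ε) * b i + ε * z₀ i)| ≤ 1 / 2 := by
      simpa [hzdef, abs_sub_comm] using abs_sub_round ((1 - ε) * b i + ε * z₀ i)
    calc |(zs i : ℝ) - ((1 - ε) * b i + ε * z₀ i)| ≤ 1 / 2 := h2
      _ = k * ε := by rw [mul_comm]; exact hεk.symm
  obtain ⟨w, hwC, hwfst⟩ := hbox hw₁mem
  set f : (Fin n → ℝ) × (Fin d → ℝ) → (Fin n → ℝ) × (Fin d → ℝ) :=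
    fun y => (1 - ε) • y + ε • w with hfdef
  have hfh : f = ⇑(AffineMap.homothety w (1 - ε)) := by
    funext y
    simp only [hfdef, AffineMap.homothety_apply, vsub_eq_sub, vadd_eq_add, smul_sub]
    module
  refine ⟨w, hwC, f '' C, rfl, ?_, ?_, ?_, ?_⟩
  · rintro _ ⟨y, hy, rfl⟩
    exact hconv hy hwC h1ε.le hε0.le (by ring)
  · rw [hfh, Measure.addHaar_image_homothety, hrank, abs_of_pos (pow_pos h1ε _)]
  · -- centroid
    have hderiv : ∀ x ∈ C, HasFDerivWithinAt f
        ((1 - ε) • ContinuousLinearMap.id ℝ ((Fin n → ℝ) × (Fin d → ℝ))) C x :=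
      fun x _ => (((hasFDerivAt_id x).const_smul (1 - ε)).add_const (ε • w)).hasFDerivWithinAt
    have hdet : ((1 - ε) • ContinuousLinearMap.id ℝ ((Fin n → ℝ) × (Fin d → ℝ))).det
        = (1 - ε) ^ (n + d) := by
      have h3 : ((1 - ε) • ContinuousLinearMap.id ℝ ((Fin n → ℝ) × (Fin d → ℝ))).det
          = LinearMap.det ((1 - ε) • (LinearMap.id :
            (Fin n → ℝ) × (Fin d → ℝ) →ₗ[ℝ] (Fin n → ℝ) × (Fin d → ℝ))) := rfl
      rw [h3, LinearMap.det_smul, LinearMap.det_id, mul_one, hrank]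
    have hinj : Set.InjOn f C := by
      intro a _ a' _ h
      have h' : (1 - ε) • a = (1 - ε) • a' := by
        have h4 := h; simp only [hfdef] at h4
        exact add_right_cancel h4
      exact smul_right_injective ((Fin n → ℝ) × (Fin d → ℝ)) h1ε.ne' h'
    have hintid : IntegrableOn (fun x : (Fin n → ℝ) × (Fin d → ℝ) => x) C volume :=
      continuousOn_id.integrableOn_compact hcomp
    have hI : ∫ y in f '' C, y =
        ((1 - ε) ^ (n + d)) • ((1 - ε) • (∫ x in C, x) + V • (ε • w)) := by
      have h0 := integral_image_eq_integral_abs_det_fderiv_smul volume hC_meas hderiv hinj id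
      simp only [id_eq, hdet, abs_of_pos (pow_pos h1ε (n + d))] at h0
      rw [h0, integral_smul]
      congr 1
      simp only [hfdef]
      have h5 : Integrable (fun a : (Fin n → ℝ) × (Fin d → ℝ) => (1 - ε) • a)
          (volume.restrict C) := hintid.smul ((1:ℝ) - ε)
      rw [integral_add h5 (integrableOn_const hVfin.ne),
        integral_smul, setIntegral_const, measureReal_def]
    have hvol : (volume (f '' C)).toReal = (1 - ε) ^ (n + d) * V := by
      rw [hfh, Measure.addHaar_image_homothety, hrank, ENNReal.toReal_mul,
        ENNReal.toReal_ofReal (abs_nonneg _), abs_of_pos (pow_pos h1ε _), hVdef]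
    refine ⟨zs, ?_⟩
    have hc : centroid (f '' C) = (1 - ε) • centroid C + ε • w := by
      simp only [centroid]
      rw [hI, hvol, ← hVdef]
      have hP : ((1:ℝ) - ε) ^ (n + d) ≠ 0 := (pow_pos h1ε _).ne'
      match_scalars <;> · field_simp
    rw [hc]
    funext i
    simp only [Prod.fst_add, Prod.smul_fst, Pi.add_apply, Pi.smul_apply, smul_eq_mul, ← hbdef]
    rw [hwfst]
    simp only [hw1def]
    field_simp
    ring
  · refine ⟨(1 - ε) • z₀ + ε • w.1, ?_⟩
    have hk2 : (1 - ε) * k = k - 1 / 2 := by rw [sub_mul, one_mul, hεk]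
    intro p hp
    set q : Fin n → ℝ := (1 - ε)⁻¹ • (p - ε • w.1) with hqdef
    have hq : q ∈ closedBall z₀ k := by
      rw [mem_closedBall, dist_eq_norm]
      have h1 : q - z₀ = (1 - ε)⁻¹ • (p - ((1 - ε) • z₀ + ε • w.1)) := by
        rw [hqdef, smul_sub, smul_sub, smul_add, inv_smul_smul₀ h1ε.ne']
        abel
      rw [h1, norm_smul, norm_inv, Real.norm_of_nonneg h1ε.le]
      have h2 : ‖p - ((1 - ε) • z₀ + ε • w.1)‖ ≤ (1 - ε) * k := by
        rw [hk2, ← dist_eq_norm]; exact hp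
      calc (1 - ε)⁻¹ * ‖p - ((1 - ε) • z₀ + ε • w.1)‖ ≤ (1 - ε)⁻¹ * ((1 - ε) * k) :=
            mul_le_mul_of_nonneg_left h2 (inv_nonneg.2 h1ε.le)
        _ = k := by field_simp
    obtain ⟨y, hyC, hy1⟩ := hbox hq
    refine ⟨f y, ⟨y, hyC, rfl⟩, ?_⟩
    show ((1 - ε) • y + ε • w).1 = p
    rw [Prod.fst_add, Prod.smul_fst, Prod.smul_fst, hy1, hqdef, smul_inv_smul₀ h1ε.ne']
    abel
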